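/- For any connected simple graph G = (V, E), the inequality χ(G)(χ(G)−1)/2 + |V| − χ(G) ≤ |E| holds, where χ(G) is the chromatic number of G. -/

import Mathlib

open SimpleGraph

noncomputable def chi {V : Type*} (G : SimpleGraph V) : ℕ := G.chromaticNumber.toNat

section Aux
variable {V : Type*} (G : SimpleGraph V)

lemma chi_colorable [Fintype V] : G.Colorable (chi G) :=
  G.colorable_chromaticNumber_of_fintype

lemma chi_le_of_colorable {m : ℕ} (h : G.Colorable m) : chi G ≤ m := by
  have h2 := h.chromaticNumber_le
  have : (chi G : ℕ∞) ≤ (m : ℕ∞) := by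
    unfold chi
    rwa [ENat.coe_toNat (by exact (h2.trans_lt (by simp)).ne)]
  exact_mod_cast this

lemma chi_pos [Fintype V] [Nonempty V] : 1 ≤ chi G := by
  by_contra h
  have h0 : chi G = 0 := by omega
  have := chi_colorable G
  rw [h0] at this
  exact (G.isEmpty_of_colorable_zero this).elim (Classical.arbitrary V)

lemma chi_le_card [Fintype V] : chi G ≤ Fintype.card V :=
  chi_le_of_colorable G G.colorable_of_fintype

end Aux


section Aux2
variable {V : Type*} {G : SimpleGraph V}

lemma reachable_induce_of_walk {s : Set V} :
    ∀ {a b : V} (p : G.Walk a b), (∀ x ∈ p.support, x ∈ s) →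
      ∀ (ha : a ∈ s) (hb : b ∈ s), (G.induce s).Reachable ⟨a, ha⟩ ⟨b, hb⟩ := by
  intro a b p
  induction p with
  | nil => intro _ ha hb; rfl
  | cons h q ih =>
    intro hs ha hb
    have hc := hs _ (by rw [SimpleGraph.Walk.support_cons]; exact List.mem_cons_of_mem _ q.start_mem_support)
    refine Reachable.trans ?_ (ih (fun x hx => hs x (by simp [SimpleGraph.Walk.support_cons, hx])) hc hb)
    exact Adj.reachable (by simpa using h)

lemma exists_noncut [Fintype V] (hG : G.Connected) (h2 : 2 ≤ Fintype.card V) :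
    ∃ v : V, (G.induce ({v}ᶜ : Set V)).Connected := by
  classical
  obtain ⟨u⟩ := hG.nonempty
  have hne : (Finset.univ.erase u).Nonempty := by
    rw [← Finset.card_pos, Finset.card_erase_of_mem (Finset.mem_univ u), Finset.card_univ]
    omega
  obtain ⟨v, hv, hmax⟩ := Finset.exists_max_image (Finset.univ.erase u) (fun w => G.dist u w) hne
  have hvu : v ≠ u := Finset.ne_of_mem_erase hv
  refine ⟨v, ?_⟩
  have hu : u ∈ ({v}ᶜ : Set V) := by simp [hvu.symm]
  rw [connected_iff]
  refine ⟨fun a b => ?_, ⟨⟨u, hu⟩⟩⟩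
  have key : ∀ w : ({v}ᶜ : Set V), (G.induce ({v}ᶜ : Set V)).Reachable ⟨u, hu⟩ w := by
    rintro ⟨w, hw⟩
    rcases eq_or_ne w u with rfl | hwu
    · rfl
    obtain ⟨p, hlen⟩ := (hG.preconnected u w).exists_walk_length_eq_dist
    have hsupp : ∀ x ∈ p.support, x ∈ ({v}ᶜ : Set V) := by
      intro x hx
      simp only [Set.mem_compl_iff, Set.mem_singleton_iff]
      rintro rfl
      -- v is in the support of p
      have hq := SimpleGraph.dist_le (p.takeUntil x hx)
      have hr : 1 ≤ (p.dropUntil x hx).length := by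
        by_contra hr
        have h0 : (p.dropUntil x hx).length = 0 := by omega
        have := SimpleGraph.Walk.eq_of_length_eq_zero h0
        exact (hw (by simp [this]))
      have hsum : (p.takeUntil x hx).length + (p.dropUntil x hx).length = p.length := by
        rw [← SimpleGraph.Walk.length_append, SimpleGraph.Walk.take_spec]
      have hwle : G.dist u w ≤ G.dist u x := hmax w (by simp [hwu])
      omega
    exact reachable_induce_of_walk p hsupp hu hw
  exact ((key a).symm).trans (key b)

end Aux2


section Aux3
variable {V : Type*} (G : SimpleGraph V)

lemma edge_count_induce_compl [Fintype V] (v : V) :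
    (G.induce ({v}ᶜ : Set V)).edgeSet.ncard + (G.neighborSet v).ncard ≤ G.edgeSet.ncard := by
  classical
  set A : Set (Sym2 V) := Sym2.map (Subtype.val) '' (G.induce ({v}ᶜ : Set V)).edgeSet with hA
  have hAsub : A ⊆ G.edgeSet := by
    rintro e ⟨e', he', rfl⟩
    induction e' with
    | _ a b =>
      simp only [mem_edgeSet] at he' ⊢
      simpa using he'
  have hBsub : G.incidenceSet v ⊆ G.edgeSet := G.incidenceSet_subset v
  have hdisj : Disjoint A (G.incidenceSet v) := by
    rw [Set.disjoint_left]
    rintro e ⟨e', he', rfl⟩ hB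
    have hv : v ∈ Sym2.map Subtype.val e' := hB.2
    rw [Sym2.mem_map] at hv
    obtain ⟨⟨w, hw⟩, -, hwv⟩ := hv
    exact hw hwv
  have hfin : G.edgeSet.Finite := Set.toFinite _
  have hle : (A ∪ G.incidenceSet v).ncard ≤ G.edgeSet.ncard :=
    Set.ncard_le_ncard (Set.union_subset hAsub hBsub) hfin
  rw [Set.ncard_union_eq hdisj (hfin.subset hAsub) (hfin.subset hBsub)] at hle
  have hAcard : A.ncard = (G.induce ({v}ᶜ : Set V)).edgeSet.ncard :=
    Set.ncard_image_of_injective _ (Sym2.map.injective Subtype.val_injective)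
  have hinc : (G.incidenceSet v).ncard = (G.neighborSet v).ncard := by
    rw [Set.ncard_eq_toFinset_card', Set.ncard_eq_toFinset_card']
    rw [Set.toFinset_card, Set.toFinset_card]
    exact Fintype.card_congr (G.incidenceSetEquivNeighborSet v)
  omega

lemma chi_le_chi_induce_succ [Fintype V] (v : V) :
    chi G ≤ chi (G.induce ({v}ᶜ : Set V)) + 1 := by
  classical
  set G' := G.induce ({v}ᶜ : Set V) with hG'
  set m := chi G' with hm
  obtain ⟨C⟩ := chi_colorable G'
  refine chi_le_of_colorable G ⟨Coloring.mk
    (fun w => if h : w = v then Fin.last m else (C ⟨w, h⟩).castSucc) ?_⟩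
  intro a b hab
  by_cases ha : a = v <;> by_cases hb : b = v
  · exact absurd (ha.trans hb.symm) (G.ne_of_adj hab)
  · simp only [dif_pos ha, dif_neg hb]; exact (Fin.castSucc_lt_last _).ne'
  · simp only [dif_pos hb, dif_neg ha]; exact (Fin.castSucc_lt_last _).ne
  · simp only [dif_neg ha, dif_neg hb]
    have : G'.Adj ⟨a, ha⟩ ⟨b, hb⟩ := by simpa [hG'] using hab
    exact fun hcc => C.valid this (Fin.castSucc_injective _ hcc)

lemma chi_induce_le [Fintype V] (v : V) :
    chi (G.induce ({v}ᶜ : Set V)) ≤ chi G := by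
  classical
  exact chi_le_of_colorable _ ((chi_colorable G).of_hom (Embedding.induce _).toHom)

lemma deg_ge_of_chi_lt [Fintype V] (v : V)
    (hlt : chi (G.induce ({v}ᶜ : Set V)) < chi G) :
    chi (G.induce ({v}ᶜ : Set V)) ≤ (G.neighborSet v).ncard := by
  classical
  set G' := G.induce ({v}ᶜ : Set V) with hG'
  set m := chi G' with hm
  obtain ⟨C⟩ := chi_colorable G'
  have hsurj : Function.Surjective
      (fun w : G.neighborSet v => C ⟨w.1, fun h => G.irrefl (h ▸ w.2)⟩) := by
    intro i
    by_contra hi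
    push_neg at hi
    have hcol : G.Colorable m := by
      refine ⟨Coloring.mk (fun w => if h : w = v then i else C ⟨w, h⟩) ?_⟩
      intro a b hab
      by_cases ha : a = v <;> by_cases hb : b = v
      · exact absurd (ha.trans hb.symm) (G.ne_of_adj hab)
      · simp only [dif_pos ha, dif_neg hb]
        exact fun hc => hi ⟨b, by rwa [ha] at hab⟩ hc.symm
      · simp only [dif_pos hb, dif_neg ha]
        exact fun hc => hi ⟨a, by rw [hb] at hab; exact hab.symm⟩ hc
      · simp only [dif_neg ha, dif_neg hb]
        have : G'.Adj ⟨a, ha⟩ ⟨b, hb⟩ := by simpa [hG'] using hab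
        exact C.valid this
    exact absurd (chi_le_of_colorable G hcol) (by omega)
  have := Nat.card_le_card_of_surjective _ hsurj
  rw [Nat.card_eq_fintype_card, Fintype.card_fin] at this
  rwa [Nat.card_coe_set_eq] at this

end Aux3

section Main
universe u

lemma neighbor_ncard_pos {V : Type u} [Fintype V] (G : SimpleGraph V) (hG : G.Connected)
    (h2 : 2 ≤ Fintype.card V) (v : V) : 1 ≤ (G.neighborSet v).ncard := by
  obtain ⟨w, hw⟩ : ∃ w : V, w ≠ v := Fintype.exists_ne_of_one_lt_card (by omega) v
  obtain ⟨p⟩ := hG.preconnected v w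
  have hnb : (G.neighborSet v).Nonempty := by
    cases p with
    | nil => exact absurd rfl hw
    | cons h q => exact ⟨_, h⟩
  have := (Set.ncard_pos (Set.toFinite _)).mpr hnb
  omega

lemma key : ∀ (n : ℕ) (V : Type u) [Fintype V] (G : SimpleGraph V), G.Connected →
    Fintype.card V ≤ n →
    (chi G).choose 2 + (Fintype.card V - chi G) ≤ G.edgeSet.ncard := by
  intro n
  induction n with
  | zero =>
    intro V _ G hG hn
    have : Nonempty V := hG.nonempty
    have := Fintype.card_pos (α := V)
    omega
  | succ n ih =>
    intro V _ G hG hn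
    classical
    have hne : Nonempty V := hG.nonempty
    have hpos : 1 ≤ Fintype.card V := Fintype.card_pos
    by_cases h2 : 2 ≤ Fintype.card V
    · obtain ⟨v, hconn'⟩ := exists_noncut hG h2
      have hcard' : Fintype.card ({v}ᶜ : Set V) = Fintype.card V - 1 := by
        rw [Fintype.card_compl_set]
        simp
      have hIH := ih _ (G.induce ({v}ᶜ : Set V)) hconn' (by omega)
      have hEdge := edge_count_induce_compl G v
      have hle := chi_induce_le G v
      have hsucc := chi_le_chi_induce_succ G v
      rcases eq_or_lt_of_le hle with heq | hlt
      · have hdeg := neighbor_ncard_pos G hG h2 v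
        rw [heq, hcard'] at hIH
        omega
      · have hdeg := deg_ge_of_chi_lt G v hlt
        have hk : chi G = chi (G.induce ({v}ᶜ : Set V)) + 1 := by omega
        have hch : (chi (G.induce ({v}ᶜ : Set V)) + 1).choose 2 =
            chi (G.induce ({v}ᶜ : Set V)) + (chi (G.induce ({v}ᶜ : Set V))).choose 2 := by
          simp [Nat.choose_succ_succ, Nat.choose_one_right]
        rw [hcard'] at hIH
        rw [hk, hch]
        omega
    · have h1 : Fintype.card V = 1 := by omega
      have hchi : chi G = 1 := le_antisymm (by simpa [h1] using chi_le_card G) (chi_pos G)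
      simp [hchi, h1]

end Main

theorem stmt0 {V : Type*} [Fintype V] (G : SimpleGraph V) (hG : G.Connected) :
    chi G * (chi G - 1) / 2 + Fintype.card V - chi G ≤ G.edgeSet.ncard := by
  have hkey := key (Fintype.card V) V G hG le_rfl
  have h1 : chi G ≤ Fintype.card V := chi_le_card G
  rw [Nat.choose_two_right] at hkey
  omega
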